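/- Let S be a commutative ring of characteristic-0 mixed setting in which p is not a zero divisor, and suppose p^{1/p^{n-1}} ∈ S is an element whose p^{n-1}-st power is p. In the ring of Witt vectors W_n(S/pS) of length n, the ghost-component style map c_n : W_n(S/pS) → S/p^nS defined by c_n(s_0,…,s_{n-1}) = Σ_{i=0}^{n-1} p^i \tilde{s}_i^{p^{n-1-i}} (where \tilde{s}_i is any lift of s_i) is a well-defined ring homomorphism. -/

import Mathlib

open WittVector Finset

/-- For a commutative ring `S` in which `p` is not a zero divisor, the map
`c_n : W_n(S/pS) → S/p^nS`, `(s_0, …, s_{n-1}) ↦ Σ p^i s̃_i^{p^{n-1-i}}`, is a well-defined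
ring homomorphism. -/
theorem stmt_2 (p : ℕ) [Fact p.Prime] (n : ℕ) (hn : 1 ≤ n)
    (S : Type*) [CommRing S]
    (hp : ∀ x : S, (p : S) * x = 0 → x = 0) :
    ∃ c : TruncatedWittVector p n (S ⧸ Ideal.span {(p : S)}) →+*
        S ⧸ Ideal.span {(p : S) ^ n},
      ∀ s : Fin n → S,
        c (TruncatedWittVector.mk p fun i => Ideal.Quotient.mk _ (s i)) =
          Ideal.Quotient.mk _ (∑ i : Fin n, (p : S) ^ (i : ℕ) * s i ^ p ^ (n - 1 - (i : ℕ))) := by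
  have hp2 : 2 ≤ p := (Fact.out : p.Prime).two_le
  set R := S ⧸ Ideal.span {(p : S)} with hR
  let f : WittVector p S →+* TruncatedWittVector p n R :=
    (WittVector.truncate n).comp (WittVector.map (Ideal.Quotient.mk _))
  have hfsurj : Function.Surjective f :=
    (WittVector.truncate_surjective p n R).comp
      (WittVector.map_surjective _ Ideal.Quotient.mk_surjective)
  let g : WittVector p S →+* S ⧸ Ideal.span {(p : S) ^ n} :=
    (Ideal.Quotient.mk _).comp (WittVector.ghostComponent (n - 1))
  -- key divisibility: each ghost term of a vector with coefficients divisible by p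
  -- is divisible by p^n
  have hterm : ∀ (i : ℕ), i < n → ∀ t : S, (p : S) ∣ t →
      ((p : S) ^ n ∣ (p : S) ^ i * t ^ p ^ (n - 1 - i)) := by
    intro i hi t ht
    have h1 : n - i ≤ p ^ (n - 1 - i) := by
      have hk : n - i = (n - 1 - i) + 1 := by omega
      calc n - i = (n - 1 - i) + 1 := hk
        _ ≤ 2 ^ (n - 1 - i) := Nat.succ_le_of_lt Nat.lt_two_pow_self
        _ ≤ p ^ (n - 1 - i) := Nat.pow_le_pow_left hp2 _
    have h2 : (p : S) ^ (p ^ (n - 1 - i)) ∣ t ^ p ^ (n - 1 - i) :=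
      pow_dvd_pow_of_dvd ht _
    have h3 : (p : S) ^ n ∣ (p : S) ^ i * (p : S) ^ (p ^ (n - 1 - i)) := by
      rw [← pow_add]
      exact pow_dvd_pow _ (by omega)
    exact h3.trans (mul_dvd_mul_left _ h2)
  have hker : RingHom.ker f ≤ RingHom.ker g := by
    intro x hx
    rw [RingHom.mem_ker] at hx ⊢
    have hx' : ∀ i < n, (p : S) ∣ x.coeff i := by
      intro i hi
      have hmem : WittVector.map (Ideal.Quotient.mk (Ideal.span {(p : S)})) x ∈
          RingHom.ker (WittVector.truncate (p := p) n) := hx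
      rw [WittVector.mem_ker_truncate] at hmem
      have := hmem i hi
      rw [WittVector.map_coeff] at this
      rw [← Ideal.mem_span_singleton]
      exact Ideal.Quotient.eq_zero_iff_mem.mp this
    show (Ideal.Quotient.mk _) (WittVector.ghostComponent (n - 1) x) = 0
    rw [Ideal.Quotient.eq_zero_iff_mem, WittVector.ghostComponent_apply,
      aeval_wittPolynomial]
    apply Ideal.sum_mem
    intro i hi
    rw [Finset.mem_range] at hi
    have hi' : i < n := by omega
    rw [Ideal.mem_span_singleton]
    have : n - 1 - i = (n - 1) - i := rfl
    exact hterm i hi' _ (hx' i hi')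
  refine ⟨f.liftOfSurjective hfsurj ⟨g, hker⟩, ?_⟩
  intro s
  set x : WittVector p S :=
    WittVector.mk p (fun i => if h : i < n then s ⟨i, h⟩ else 0) with hx
  have hfx : f x = TruncatedWittVector.mk p fun i => Ideal.Quotient.mk _ (s i) := by
    ext i
    simp only [f, RingHom.comp_apply, WittVector.coeff_truncate, WittVector.map_coeff,
      TruncatedWittVector.coeff_mk, hx, WittVector.coeff_mk]
    rw [dif_pos i.2]
  rw [← hfx]
  have := RingHom.liftOfRightInverse_comp_apply f (Function.surjInv hfsurj)
    (Function.rightInverse_surjInv hfsurj) ⟨g, hker⟩ x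
  rw [this]
  show (Ideal.Quotient.mk _) (WittVector.ghostComponent (n - 1) x) = _
  rw [WittVector.ghostComponent_apply, aeval_wittPolynomial]
  congr 1
  have hn1 : n - 1 + 1 = n := by omega
  rw [hn1, ← Fin.sum_univ_eq_sum_range
    (fun i => (p : S) ^ i * x.coeff i ^ p ^ (n - 1 - i)) n]
  apply Finset.sum_congr rfl
  intro i _
  simp only [hx, WittVector.coeff_mk]
  rw [dif_pos i.2]
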